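/- For a twice-differentiable proper loss ℓ with conditional Bayes risk L(c) = inf_v E_{Y∼c}[ℓ(Y,v)], the partial losses satisfy ℓ'_{-1}(c)/c = -ℓ'_{1}(c)/(1-c) = -L''(c) for all c ∈ (0,1). -/

import Mathlib

/-- For a twice-differentiable proper loss ℓ with conditional Bayes risk
L(c) = inf_v E_{Y∼c}[ℓ(Y,v)], the partial losses satisfy
ℓ'_{-1}(c)/c = -ℓ'_{1}(c)/(1-c) = -L''(c) for all c ∈ (0,1). -/
theorem stmt_0
    (ℓ1 ℓm1 : ℝ → ℝ)
    (h1 : ContDiff ℝ 2 ℓ1) (h2 : ContDiff ℝ 2 ℓm1)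
    (L : ℝ → ℝ) (hL : ∀ π : ℝ, L π = π * ℓ1 π + (1 - π) * ℓm1 π)
    (proper : ∀ π ∈ Set.Icc (0:ℝ) 1, ∀ c ∈ Set.Icc (0:ℝ) 1,
      π * ℓ1 π + (1 - π) * ℓm1 π ≤ π * ℓ1 c + (1 - π) * ℓm1 c) :
    ∀ c ∈ Set.Ioo (0:ℝ) 1,
      deriv ℓm1 c / c = -(deriv ℓ1 c) / (1 - c) ∧
      deriv ℓm1 c / c = -(deriv (deriv L) c) := by
  have hd1 : Differentiable ℝ ℓ1 := h1.differentiable (by norm_num)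
  have hdm : Differentiable ℝ ℓm1 := h2.differentiable (by norm_num)
  -- stationarity
  have key : ∀ c ∈ Set.Ioo (0:ℝ) 1,
      c * deriv ℓ1 c + (1 - c) * deriv ℓm1 c = 0 := by
    intro c hc
    have hcI : c ∈ Set.Icc (0:ℝ) 1 := Set.Ioo_subset_Icc_self hc
    have hmin : IsLocalMin (fun x => c * ℓ1 x + (1 - c) * ℓm1 x) c := by
      filter_upwards [Icc_mem_nhds hc.1 hc.2] with x hx
      exact proper c hcI x hx
    have hder : HasDerivAt (fun x => c * ℓ1 x + (1 - c) * ℓm1 x)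
        (c * deriv ℓ1 c + (1 - c) * deriv ℓm1 c) c :=
      (((hd1 c).hasDerivAt.const_mul c).add
        ((hdm c).hasDerivAt.const_mul (1 - c)))
    have := hmin.deriv_eq_zero
    rwa [hder.deriv] at this
  intro c hc
  obtain ⟨hc0, hc1⟩ := hc
  have hkey := key c ⟨hc0, hc1⟩
  have hcne : c ≠ 0 := ne_of_gt hc0
  have hcne1 : (1 - c) ≠ 0 := by linarith
  constructor
  · field_simp
    linarith
  · -- compute deriv L everywhere
    have hLfun : L = fun π => π * ℓ1 π + (1 - π) * ℓm1 π := funext hL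
    have hderivL : ∀ x : ℝ, deriv L x =
        ℓ1 x + x * deriv ℓ1 x + (-(ℓm1 x) + (1 - x) * deriv ℓm1 x) := by
      intro x
      have h : HasDerivAt (fun π => π * ℓ1 π + (1 - π) * ℓm1 π)
          (1 * ℓ1 x + x * deriv ℓ1 x + ((0 - 1) * ℓm1 x + (1 - x) * deriv ℓm1 x)) x := by
        exact ((hasDerivAt_id x).mul (hd1 x).hasDerivAt).add
          (((hasDerivAt_const x (1:ℝ)).sub (hasDerivAt_id x)).mul (hdm x).hasDerivAt)
      rw [hLfun, h.deriv]; ring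
    have hevent : deriv L =ᶠ[nhds c] fun x => ℓ1 x - ℓm1 x := by
      filter_upwards [isOpen_Ioo.mem_nhds (⟨hc0, hc1⟩ : c ∈ Set.Ioo (0:ℝ) 1)] with x hx
      have := key x hx
      rw [hderivL x]; linarith
    have : deriv (deriv L) c = deriv ℓ1 c - deriv ℓm1 c := by
      rw [hevent.deriv_eq, deriv_fun_sub (hd1 c) (hdm c)]
    rw [this]
    field_simp
    linarith [mul_comm c (deriv ℓm1 c)]
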